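/- Let f : ℝⁿ → ℝ be differentiable, Π ⊆ ℝⁿ a nonempty closed convex set, x ∈ Π, μ̄ > 0, G ∈ ℝ^{n×n} symmetric positive semidefinite, and define Θ(y) := f(x) + ⟨∇f(x), y − x⟩ + (1/2)⟨y − x, G(y − x)⟩ + δ_Π(y), R(y) := μ̄[y − proj_Π(y − μ̄⁻¹(G(y − x) + ∇f(x)))], and r := μ̄[x − proj_Π(x − μ̄⁻¹∇f(x))]. Then for every y ∈ Π, dist(0, ∂Θ(y)) ≥ min{μ̄⁻¹, 1}·‖R(y)‖, where ∂Θ(y) := ∇f(x) + G(y − x) + N_Π(y). Consequently, for ς ∈ (0,1], if y ∈ Π satisfies dist(0, ∂Θ(y)) ≤ (min{μ̄⁻¹, 1}/2)·min{‖r‖, ‖r‖^{1+ς}}, then ‖R(y)‖ ≤ (1/2)·min{‖r‖, ‖r‖^{1+ς}}. -/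

import Mathlib

noncomputable section

/-- Identity reinterpretation of a coordinate vector as a point of Euclidean space. -/
def toEuc {n : ℕ} (v : Fin n → ℝ) : EuclideanSpace ℝ (Fin n) := WithLp.toLp 2 v

/-- Normal cone of a convex set `S` at `x`. -/
def normalCone {n : ℕ} (S : Set (EuclideanSpace ℝ (Fin n)))
    (x : EuclideanSpace ℝ (Fin n)) : Set (EuclideanSpace ℝ (Fin n)) :=
  {v | ∀ y ∈ S, (inner ℝ v (y - x) : ℝ) ≤ 0}

/-- The Euclidean projection onto a (nonempty closed convex) set `S`. -/
def projCC {n : ℕ} (S : Set (EuclideanSpace ℝ (Fin n))) (w : EuclideanSpace ℝ (Fin n)) :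
    EuclideanSpace ℝ (Fin n) :=
  Classical.epsilon (fun y => y ∈ S ∧ ∀ z ∈ S, ‖y - w‖ ≤ ‖z - w‖)

lemma projCC_spec {n : ℕ} (S : Set (EuclideanSpace ℝ (Fin n))) (hne : S.Nonempty)
    (hcl : IsClosed S) (w : EuclideanSpace ℝ (Fin n)) :
    projCC S w ∈ S ∧ ∀ z ∈ S, ‖projCC S w - w‖ ≤ ‖z - w‖ := by
  apply Classical.epsilon_spec (p := fun y => y ∈ S ∧ ∀ z ∈ S, ‖y - w‖ ≤ ‖z - w‖)
  obtain ⟨y, hy, hdist⟩ := hcl.exists_infDist_eq_dist hne w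
  refine ⟨y, hy, fun z hz => ?_⟩
  have h1 : Metric.infDist w S ≤ dist w z := Metric.infDist_le_dist_of_mem hz
  rw [hdist] at h1
  simpa [dist_eq_norm, norm_sub_rev y w, norm_sub_rev z w] using h1

lemma projCC_inner_le {n : ℕ} (S : Set (EuclideanSpace ℝ (Fin n))) (hne : S.Nonempty)
    (hcl : IsClosed S) (hconv : Convex ℝ S) (w z : EuclideanSpace ℝ (Fin n)) (hz : z ∈ S) :
    (inner ℝ (w - projCC S w) (z - projCC S w) : ℝ) ≤ 0 := by
  obtain ⟨hp, hmin⟩ := projCC_spec S hne hcl w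
  haveI : Nonempty S := ⟨⟨_, hp⟩⟩
  have h := (norm_eq_iInf_iff_real_inner_le_zero hconv hp (u := w)).mp ?_ z hz
  · exact h
  · apply le_antisymm
    · exact le_ciInf fun ⟨z', hz'⟩ => by
        simpa [norm_sub_rev] using hmin z' hz'
    · exact ciInf_le ⟨0, fun a ⟨b, hb⟩ => hb ▸ norm_nonneg _⟩ (⟨_, hp⟩ : S)

lemma key_ineq {n : ℕ} (S : Set (EuclideanSpace ℝ (Fin n))) (hne : S.Nonempty)
    (hcl : IsClosed S) (hconv : Convex ℝ S) (mubar : ℝ) (hmubar : 0 < mubar)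
    (g y : EuclideanSpace ℝ (Fin n)) (hy : y ∈ S)
    (w : EuclideanSpace ℝ (Fin n)) (hw : w ∈ normalCone S y) :
    mubar * ‖y - projCC S (y - mubar⁻¹ • g)‖ ≤ ‖g + w‖ := by
  set p := projCC S (y - mubar⁻¹ • g) with hp
  set d := y - p with hd
  have hpS : p ∈ S := (projCC_spec S hne hcl _).1
  have h1 : (inner ℝ ((y - mubar⁻¹ • g) - p) (y - p) : ℝ) ≤ 0 :=
    projCC_inner_le S hne hcl hconv _ y hy
  have heq : (y - mubar⁻¹ • g) - p = d - mubar⁻¹ • g := by rw [hd]; abel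
  rw [heq, ← hd] at h1
  rw [inner_sub_left, real_inner_smul_left, real_inner_self_eq_norm_sq] at h1
  have hgd : mubar * ‖d‖ ^ 2 ≤ inner ℝ g d := by
    have h2 := mul_le_mul_of_nonneg_left (sub_nonpos.mp h1) hmubar.le
    rwa [← mul_assoc, mul_inv_cancel₀ hmubar.ne', one_mul] at h2
  have hwd : (0 : ℝ) ≤ inner ℝ w d := by
    have := hw p hpS
    rw [show p - y = -d by rw [hd]; abel, inner_neg_right] at this
    linarith
  have hvd : mubar * ‖d‖ ^ 2 ≤ inner ℝ (g + w) d := by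
    rw [inner_add_left]; linarith
  have hcs : (inner ℝ (g + w) d : ℝ) ≤ ‖g + w‖ * ‖d‖ := real_inner_le_norm _ _
  rcases eq_or_lt_of_le (norm_nonneg d) with h0 | h0
  · rw [← h0, mul_zero]; exact norm_nonneg _
  · have : mubar * ‖d‖ * ‖d‖ ≤ ‖g + w‖ * ‖d‖ := by nlinarith
    exact le_of_mul_le_mul_right this h0

/-- with `∂Θ(y) = ∇f(x) + G(y−x) + N_Π(y)`,
`R(y) = μ̄[y − proj_Π(y − μ̄⁻¹(G(y−x) + ∇f(x)))]` and
`r = μ̄[x − proj_Π(x − μ̄⁻¹∇f(x))]`, one has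
`dist(0, ∂Θ(y)) ≥ min{μ̄⁻¹,1}·‖R(y)‖` for every `y ∈ Π`; consequently, for `ς ∈ (0,1]`, if
`dist(0, ∂Θ(y)) ≤ (min{μ̄⁻¹,1}/2)·min{‖r‖, ‖r‖^{1+ς}}` then
`‖R(y)‖ ≤ (1/2)·min{‖r‖, ‖r‖^{1+ς}}`. -/
theorem stmt12 {n : ℕ} (f : EuclideanSpace ℝ (Fin n) → ℝ) (hf : Differentiable ℝ f)
    (Pc : Set (EuclideanSpace ℝ (Fin n))) (hPcne : Pc.Nonempty) (hPccl : IsClosed Pc)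
    (hPcconv : Convex ℝ Pc)
    (x : EuclideanSpace ℝ (Fin n)) (hx : x ∈ Pc)
    (mubar : ℝ) (hmubar : 0 < mubar)
    (G : Matrix (Fin n) (Fin n) ℝ) (hGsym : G.IsSymm) (hG : G.PosSemidef)
    (R : EuclideanSpace ℝ (Fin n) → EuclideanSpace ℝ (Fin n))
    (hR : ∀ y, R y = mubar • (y - projCC Pc
      (y - mubar⁻¹ • (toEuc (G.mulVec (y - x)) + gradient f x))))
    (r : EuclideanSpace ℝ (Fin n))
    (hr : r = mubar • (x - projCC Pc (x - mubar⁻¹ • gradient f x))) :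
    (∀ y ∈ Pc,
      min mubar⁻¹ 1 * ‖R y‖ ≤
        Metric.infDist (0 : EuclideanSpace ℝ (Fin n))
          {v | ∃ w ∈ normalCone Pc y, v = gradient f x + toEuc (G.mulVec (y - x)) + w}) ∧
    (∀ ς : ℝ, 0 < ς → ς ≤ 1 → ∀ y ∈ Pc,
      Metric.infDist (0 : EuclideanSpace ℝ (Fin n))
          {v | ∃ w ∈ normalCone Pc y, v = gradient f x + toEuc (G.mulVec (y - x)) + w} ≤
        min mubar⁻¹ 1 / 2 * min ‖r‖ (‖r‖ ^ (1 + ς)) →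
      ‖R y‖ ≤ 1 / 2 * min ‖r‖ (‖r‖ ^ (1 + ς))) := by
  have hmin_pos : 0 < min mubar⁻¹ 1 := lt_min (inv_pos.mpr hmubar) one_pos
  have part1 : ∀ y ∈ Pc,
      min mubar⁻¹ 1 * ‖R y‖ ≤
        Metric.infDist (0 : EuclideanSpace ℝ (Fin n))
          {v | ∃ w ∈ normalCone Pc y, v = gradient f x + toEuc (G.mulVec (y - x)) + w} := by
    intro y hy
    have hbound : ∀ v ∈ {v | ∃ w ∈ normalCone Pc y,
        v = gradient f x + toEuc (G.mulVec (y - x)) + w},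
        min mubar⁻¹ 1 * ‖R y‖ ≤ ‖v‖ := by
      rintro v ⟨w, hw, rfl⟩
      have hkey := key_ineq Pc hPcne hPccl hPcconv mubar hmubar
        (toEuc (G.mulVec (y - x)) + gradient f x) y hy w hw
      have hRy : ‖R y‖ = mubar * ‖y - projCC Pc
          (y - mubar⁻¹ • (toEuc (G.mulVec (y - x)) + gradient f x))‖ := by
        rw [hR y, norm_smul, Real.norm_eq_abs, abs_of_pos hmubar]
      have heq : gradient f x + toEuc (G.mulVec (y - x)) + w
          = (toEuc (G.mulVec (y - x)) + gradient f x) + w := by abel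
      rw [heq]
      calc min mubar⁻¹ 1 * ‖R y‖ ≤ 1 * ‖R y‖ :=
            mul_le_mul_of_nonneg_right (min_le_right _ _) (norm_nonneg _)
        _ = ‖R y‖ := one_mul _
        _ ≤ _ := by rw [hRy]; exact hkey
    by_contra hcon
    push_neg at hcon
    have hne : {v | ∃ w ∈ normalCone Pc y,
        v = gradient f x + toEuc (G.mulVec (y - x)) + w}.Nonempty := by
      refine ⟨gradient f x + toEuc (G.mulVec (y - x)) + 0, 0, fun z hz => ?_, rfl⟩
      simp [inner_zero_left]
    obtain ⟨v, hvmem, hvlt⟩ := (Metric.infDist_lt_iff hne).mp hcon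
    rw [dist_zero_left] at hvlt
    exact absurd (hbound v hvmem) (not_le.mpr hvlt)
  refine ⟨part1, fun ς hς0 hς1 y hy hsmall => ?_⟩
  have h := (part1 y hy).trans hsmall
  rw [div_mul_eq_mul_div, mul_div_assoc] at h
  have := le_of_mul_le_mul_left (by linarith : min mubar⁻¹ 1 * ‖R y‖ ≤
    min mubar⁻¹ 1 * (min ‖r‖ (‖r‖ ^ (1 + ς)) / 2)) hmin_pos
  linarith

end
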